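/- Let f : ℝ → ℝ be C¹ with f(t) ≥ d > 0 and |f'(t)| ≤ 2β for all t, and assume ∫_0^{+∞} f(ξ)^{−5/3} dξ = ∫_{−∞}^{0} f(ξ)^{−5/3} dξ = ∞. Let k(t) := ∫_0^t f(ξ)^{−5/3} dξ, let h : ℝ → ℝ be the inverse function of k, and with β* := (4β)^{−1} set h_L(t) := h(−t) + β* f(h(−t)) and h_R(t) := h(t) − β* f(h(t)). Then for every t ∈ ℝ: (d/dt) h_L(t) ≤ −d^{5/3}/2 and (d/dt) h_R(t) ≥ d^{5/3}/2. -/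

import Mathlib

open MeasureTheory Set

/-- with `k(t) = ∫_0^t f(ξ)^{−5/3} dξ` a bijection of `ℝ` (both improper
integrals diverge), `h = k⁻¹`, and `β* = (4β)⁻¹`, the functions
`h_L(t) = h(−t) + β* f(h(−t))` and `h_R(t) = h(t) − β* f(h(t))` satisfy
`h_L' ≤ −d^{5/3}/2` and `h_R' ≥ d^{5/3}/2`. -/
theorem stmt_16 (f : ℝ → ℝ) (d β : ℝ)
    (hd : 0 < d) (hfd : ∀ t : ℝ, d ≤ f t)
    (hf : ContDiff ℝ 1 f)
    (hf' : ∀ t : ℝ, |deriv f t| ≤ 2 * β)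
    -- divergence of both improper integrals of `f^{-5/3}`
    (hdivtop : ¬ IntegrableOn (fun ξ : ℝ => (f ξ) ^ (-(5 : ℝ) / 3)) (Ici 0))
    (hdivbot : ¬ IntegrableOn (fun ξ : ℝ => (f ξ) ^ (-(5 : ℝ) / 3)) (Iic 0))
    (k h : ℝ → ℝ)
    (hk : ∀ t : ℝ, k t = ∫ ξ in (0 : ℝ)..t, (f ξ) ^ (-(5 : ℝ) / 3))
    -- `h` is the inverse function of `k`
    (hinv₁ : ∀ s : ℝ, h (k s) = s) (hinv₂ : ∀ t : ℝ, k (h t) = t) :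
    ∀ t : ℝ,
      (∃ D : ℝ,
        HasDerivAt (fun τ : ℝ => h (-τ) + (4 * β)⁻¹ * f (h (-τ))) D t ∧
          D ≤ -(d ^ ((5 : ℝ) / 3)) / 2) ∧
      (∃ D : ℝ,
        HasDerivAt (fun τ : ℝ => h τ - (4 * β)⁻¹ * f (h τ)) D t ∧
          d ^ ((5 : ℝ) / 3) / 2 ≤ D) := by
  set g : ℝ → ℝ := fun ξ => (f ξ) ^ (-(5 : ℝ) / 3) with hg
  have hfpos : ∀ x, 0 < f x := fun x => lt_of_lt_of_le hd (hfd x)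
  have hgc : Continuous g :=
    hf.continuous.rpow_const (fun x => Or.inl (hfpos x).ne')
  have hgpos : ∀ x, 0 < g x := fun x => Real.rpow_pos_of_pos (hfpos x) _
  -- derivative of k
  have hkderiv : ∀ s : ℝ, HasDerivAt k (g s) s := by
    intro s
    have := hgc.integral_hasStrictDerivAt 0 s
    have h1 : HasDerivAt (fun u => ∫ x in (0:ℝ)..u, g x) (g s) s := this.hasDerivAt
    exact h1.congr_of_eventuallyEq (Filter.Eventually.of_forall fun t => hk t)
  -- k is strictly monotone
  have hkmono : StrictMono k :=
    strictMono_of_hasDerivAt_pos hkderiv hgpos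
  -- h is monotone
  have hhmono : Monotone h := by
    intro a b hab
    have := hkmono.le_iff_le (a := h a) (b := h b)
    rw [hinv₂, hinv₂] at this
    exact this.mp hab
  have hhsurj : Function.Surjective h := fun s => ⟨k s, hinv₁ s⟩
  have hhcont : Continuous h := hhmono.continuous_of_surjective hhsurj
  -- derivative of h
  have hhd : ∀ t : ℝ, HasDerivAt h ((f (h t)) ^ ((5:ℝ)/3)) t := by
    intro t
    have hinvval : (g (h t))⁻¹ = (f (h t)) ^ ((5:ℝ)/3) := by
      have he : g (h t) = (f (h t)) ^ (-((5:ℝ)/3)) := by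
        simp only [hg]; norm_num
      rw [he, Real.rpow_neg (hfpos (h t)).le, inv_inv]
    have := HasDerivAt.of_local_left_inverse (hhcont.continuousAt)
      (hkderiv (h t)) (hgpos (h t)).ne'
      (Filter.Eventually.of_forall fun y => hinv₂ y)
    rwa [hinvval] at this
  -- β facts
  have hβ0 : 0 ≤ β := by
    have := hf' 0
    have h0 := abs_nonneg (deriv f 0)
    linarith
  have hckey : ∀ x : ℝ, |(4 * β)⁻¹ * deriv f x| ≤ 1/2 := by
    intro x
    rcases eq_or_lt_of_le hβ0 with hβe | hβp
    · have : deriv f x = 0 := by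
        have := hf' x
        rw [← hβe] at this
        simpa using abs_nonpos_iff.mp (by linarith)
      simp [this]
    · rw [abs_mul, abs_inv]
      have h4β : (0:ℝ) < 4 * β := by linarith
      rw [abs_of_pos h4β]
      rw [inv_mul_le_iff₀ h4β]
      calc |deriv f x| ≤ 2 * β := hf' x
        _ = 4 * β * (1/2) := by ring
  have hH : ∀ x : ℝ, d ^ ((5:ℝ)/3) ≤ (f x) ^ ((5:ℝ)/3) := fun x =>
    Real.rpow_le_rpow hd.le (hfd x) (by norm_num)
  have hHpos : ∀ x : ℝ, 0 < (f x) ^ ((5:ℝ)/3) := fun x =>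
    Real.rpow_pos_of_pos (hfpos x) _
  have hfder : ∀ x : ℝ, HasDerivAt f (deriv f x) x := fun x =>
    ((hf.differentiable one_ne_zero) x).hasDerivAt
  intro t
  constructor
  · -- left function
    set H := (f (h (-t))) ^ ((5:ℝ)/3) with hHdef
    have hneg : HasDerivAt (fun τ : ℝ => -τ) (-1 : ℝ) t := by
      simpa using (hasDerivAt_neg t)
    have hh1 : HasDerivAt (fun τ : ℝ => h (-τ)) (H * (-1)) t :=
      (hhd (-t)).comp t hneg
    have hh2 : HasDerivAt (fun τ : ℝ => f (h (-τ))) (deriv f (h (-t)) * (H * (-1))) t :=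
      (hfder (h (-t))).comp t hh1
    refine ⟨H * (-1) + (4 * β)⁻¹ * (deriv f (h (-t)) * (H * (-1))),
      hh1.add (hh2.const_mul _), ?_⟩
    have habs := hckey (h (-t))
    have h1 : -((4 * β)⁻¹ * deriv f (h (-t))) ≤ 1/2 := by
      have := neg_abs_le ((4 * β)⁻¹ * deriv f (h (-t)))
      linarith [abs_le.mp habs]
    have hHb := hH (h (-t))
    have hHp := hHpos (h (-t))
    have e1 : H * (-1) + (4 * β)⁻¹ * (deriv f (h (-t)) * (H * (-1)))
        = -(H * (1 + (4 * β)⁻¹ * deriv f (h (-t)))) := by ring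
    rw [e1]
    have h2 : (1:ℝ)/2 ≤ 1 + (4 * β)⁻¹ * deriv f (h (-t)) := by
      have := abs_le.mp habs
      linarith
    have h3 : d ^ ((5:ℝ)/3) / 2 ≤ H * (1 + (4 * β)⁻¹ * deriv f (h (-t))) := by
      calc d ^ ((5:ℝ)/3) / 2 ≤ H * (1/2) := by
            rw [div_eq_mul_one_div]
            exact mul_le_mul_of_nonneg_right hHb (by norm_num)
        _ ≤ H * (1 + (4 * β)⁻¹ * deriv f (h (-t))) :=
            mul_le_mul_of_nonneg_left h2 hHp.le
    linarith
  · set H := (f (h t)) ^ ((5:ℝ)/3) with hHdef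
    have hh1 : HasDerivAt (fun τ : ℝ => h τ) H t := hhd t
    have hh2 : HasDerivAt (fun τ : ℝ => f (h τ)) (deriv f (h t) * H) t :=
      (hfder (h t)).comp t hh1
    refine ⟨H - (4 * β)⁻¹ * (deriv f (h t) * H),
      hh1.sub (hh2.const_mul _), ?_⟩
    have habs := abs_le.mp (hckey (h t))
    have hHb := hH (h t)
    have hHp := hHpos (h t)
    have e1 : H - (4 * β)⁻¹ * (deriv f (h t) * H)
        = H * (1 - (4 * β)⁻¹ * deriv f (h t)) := by ring
    rw [e1]
    have h2 : (1:ℝ)/2 ≤ 1 - (4 * β)⁻¹ * deriv f (h t) := by linarith [habs.2]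
    calc d ^ ((5:ℝ)/3) / 2 ≤ H * (1/2) := by
          rw [div_eq_mul_one_div]
          exact mul_le_mul_of_nonneg_right hHb (by norm_num)
      _ ≤ H * (1 - (4 * β)⁻¹ * deriv f (h t)) :=
          mul_le_mul_of_nonneg_left h2 hHp.le
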